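/- arXiv:2311.15644 — 10 statements merged into one kernel-verified Lean document; each statement's English description precedes it below -/
import Mathlib

section
/- Let Y be a real normed space, K ⊆ Y a pointed closed convex cone with nonempty interior, and A, B nonempty subsets of Y with B + K convex. If for every nonzero y* ∈ K⁺ one has y*(A) ⊆ y*(B) + (0,∞), then A ⊆ B + int K. -/
open Pointwise

theorem stmt3 {Y : Type*} [NormedAddCommGroup Y] [NormedSpace ℝ Y]
    (K : Set Y) (hKclosed : IsClosed K) (hKconv : Convex ℝ K)
    (hKcone : ∀ c : ℝ, 0 ≤ c → ∀ k ∈ K, c • k ∈ K)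
    (hKpointed : K ∩ (-K) ⊆ {0})
    (hKint : (interior K).Nonempty)
    (A B : Set Y) (hA : A.Nonempty) (hB : B.Nonempty)
    (hBKconv : Convex ℝ (B + K))
    (h : ∀ y : Y →L[ℝ] ℝ, y ≠ 0 → (∀ k ∈ K, 0 ≤ y k) →
      y '' A ⊆ y '' B + Set.Ioi (0:ℝ)) :
    A ⊆ B + interior K := by
  obtain ⟨u0, hu0⟩ := hKint
  have hu0K : u0 ∈ K := interior_subset hu0
  have h0K : (0:Y) ∈ K := by simpa using hKcone 0 le_rfl u0 hu0K
  -- K is closed under addition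
  have haddK : ∀ k1 ∈ K, ∀ k2 ∈ K, k1 + k2 ∈ K := by
    intro k1 h1 k2 h2
    have hc : (1/2:ℝ) • k1 + (1/2:ℝ) • k2 ∈ K :=
      hKconv h1 h2 (by norm_num) (by norm_num) (by norm_num)
    have h2' := hKcone 2 (by norm_num) _ hc
    have : (2:ℝ) • ((1/2:ℝ) • k1 + (1/2:ℝ) • k2) = k1 + k2 := by
      rw [smul_add, smul_smul, smul_smul]; norm_num
    rwa [this] at h2'
  -- K + interior K ⊆ interior K
  have hKintK : ∀ k ∈ K, ∀ u ∈ interior K, k + u ∈ interior K := by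
    intro k hk u hu
    have hopen : IsOpen ((fun y => k + y) '' interior K) :=
      (isOpenMap_add_left k) _ isOpen_interior
    have hsub : (fun y => k + y) '' interior K ⊆ K := by
      rintro _ ⟨v, hv, rfl⟩
      exact haddK k hk v (interior_subset hv)
    exact interior_maximal hsub hopen ⟨u, hu, rfl⟩
  -- positive scaling preserves interior K
  have hsmulint : ∀ t : ℝ, 0 < t → ∀ u ∈ interior K, t • u ∈ interior K := by
    intro t ht u hu
    have hopen : IsOpen (t • interior K) := isOpen_interior.smul₀ (ne_of_gt ht)
    have hsub : t • interior K ⊆ K := by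
      rintro _ ⟨v, hv, rfl⟩
      exact hKcone t ht.le v (interior_subset hv)
    exact interior_maximal hsub hopen ⟨u, hu, rfl⟩
  -- B + interior K = (B + K) + interior K, hence convex
  have hCeq : B + interior K = (B + K) + interior K := by
    ext x
    constructor
    · rintro ⟨b, hb, u, hu, rfl⟩
      exact ⟨b + 0, ⟨b, hb, 0, h0K, rfl⟩, u, hu, by rw [add_zero]⟩
    · rintro ⟨_, ⟨b, hb, k, hk, rfl⟩, u, hu, rfl⟩
      exact ⟨b, hb, k + u, hKintK k hk u hu, by exact (add_assoc b k u).symm⟩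
  have hCconv : Convex ℝ (B + interior K) := by
    rw [hCeq]; exact hBKconv.add hKconv.interior
  have hCopen : IsOpen (B + interior K) := isOpen_interior.add_left
  intro a ha
  by_contra hnot
  obtain ⟨f, hf⟩ := geometric_hahn_banach_point_open hCconv hCopen hnot
  obtain ⟨b0, hb0⟩ := hB
  have hfb0u0 : f a < f b0 + f u0 := by
    have := hf (b0 + u0) ⟨b0, hb0, u0, hu0, rfl⟩
    simpa using this
  -- f is nonneg on K
  have hfK : ∀ k ∈ K, 0 ≤ f k := by
    intro k hk
    by_contra hneg
    push_neg at hneg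
    set t : ℝ := (f b0 + f u0 + 1 - f a) / (-f k) with ht
    have htpos : 0 < t := div_pos (by linarith) (by linarith)
    have hmem : b0 + (u0 + t • k) ∈ B + interior K :=
      ⟨b0, hb0, u0 + t • k, by
        have : u0 + t • k = (t • k) + u0 := by abel
        rw [this]
        exact hKintK _ (hKcone t htpos.le k hk) u0 hu0, rfl⟩
    have := hf _ hmem
    have heval : f (b0 + (u0 + t • k)) = f b0 + f u0 + t * f k := by
      simp [map_add, map_smul]; ring
    rw [heval] at this
    have hfk : f k ≠ 0 := ne_of_lt hneg
    have htk : t * f k = -(f b0 + f u0 + 1 - f a) := by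
      rw [ht, div_neg, neg_mul, div_mul_cancel₀ _ hfk]
    rw [htk] at this
    linarith
  -- f ≠ 0
  have hfne : f ≠ 0 := by
    intro h0
    rw [h0] at hfb0u0
    simp at hfb0u0
  -- apply the hypothesis
  obtain ⟨_, ⟨b, hb, rfl⟩, r, hr, hsum⟩ := h f hfne hfK ⟨a, ha, rfl⟩
  have hfab : f b < f a := by
    have : f b + r = f a := hsum
    simp only [Set.mem_Ioi] at hr
    linarith
  -- but f a < f b + t * f u0 for all t > 0, contradiction
  rcases le_or_gt (f u0) 0 with hc | hc
  · have := hf (b + u0) ⟨b, hb, u0, hu0, rfl⟩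
    simp only [map_add] at this
    linarith
  · set t : ℝ := (f a - f b) / (2 * f u0) with ht
    have htpos : 0 < t := div_pos (by linarith) (by linarith)
    have hmem : b + t • u0 ∈ B + interior K := ⟨b, hb, t • u0, hsmulint t htpos u0 hu0, rfl⟩
    have := hf _ hmem
    simp only [map_add, map_smul, smul_eq_mul] at this
    have htu : t * f u0 = (f a - f b) / 2 := by
      rw [ht, div_mul_eq_mul_div, mul_comm (2:ℝ) (f u0), ← div_div,
        mul_div_assoc, div_self hc.ne', mul_one]
    rw [htu] at this
    linarith
end

section
/- Cone variant of the Rådström cancellation law: Let Y be a real normed space, K ⊆ Y a convex cone, and A, B, C ⊆ Y nonempty sets such that C is K-bounded (i.e., C ⊆ M + K for some bounded set M) and A + C ⊆ cl(C + B + K). Then A ⊆ cl(conv(B + K)). -/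
open Pointwise

theorem stmt4 {Y : Type*} [NormedAddCommGroup Y] [NormedSpace ℝ Y]
    (K : Set Y) (hKconv : Convex ℝ K)
    (hKcone : ∀ c : ℝ, 0 ≤ c → ∀ k ∈ K, c • k ∈ K)
    (A B C : Set Y) (hA : A.Nonempty) (hB : B.Nonempty) (hC : C.Nonempty)
    (hCbdd : ∃ M : Set Y, Bornology.IsBounded M ∧ C ⊆ M + K)
    (h : A + C ⊆ closure (C + B + K)) :
    A ⊆ closure (convexHull ℝ (B + K)) := by
  obtain ⟨M, hMbdd, hCM⟩ := hCbdd
  obtain ⟨R, hR⟩ := hMbdd.exists_norm_le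
  -- K + K ⊆ K
  have hKK : ∀ k₁ ∈ K, ∀ k₂ ∈ K, k₁ + k₂ ∈ K := by
    intro k₁ h₁ k₂ h₂
    have hmid : (1/2 : ℝ) • k₁ + (1/2 : ℝ) • k₂ ∈ K :=
      hKconv h₁ h₂ (by norm_num) (by norm_num) (by norm_num)
    have := hKcone 2 (by norm_num) _ hmid
    have heq : (2:ℝ) • ((1/2 : ℝ) • k₁ + (1/2 : ℝ) • k₂) = k₁ + k₂ := by
      rw [smul_add, smul_smul, smul_smul]; norm_num
    rwa [heq] at this
  -- conv(B+K) + K ⊆ conv(B+K)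
  have hconvK : ∀ x ∈ convexHull ℝ (B + K), ∀ k ∈ K, x + k ∈ convexHull ℝ (B + K) := by
    intro x hx k hk
    have h1 : x + k ∈ convexHull ℝ (B + K) + convexHull ℝ K :=
      Set.add_mem_add hx (subset_convexHull ℝ K hk)
    rw [← convexHull_add] at h1
    refine convexHull_mono ?_ h1
    rintro z ⟨p, ⟨b, hb, k₁, hk₁, rfl⟩, k₂, hk₂, rfl⟩
    exact ⟨b, hb, k₁ + k₂, hKK _ hk₁ _ hk₂, by show b + (k₁ + k₂) = b + k₁ + k₂; abel⟩
  intro a ha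
  obtain ⟨c₀, hc₀⟩ := hC
  rw [Metric.mem_closure_iff]
  intro δ hδ
  -- the approximation step
  have step : ∀ c ∈ C, ∀ ε : ℝ, 0 < ε → ∃ c' ∈ C, ∃ b ∈ B, ∃ k ∈ K,
      ‖a + c - (c' + b + k)‖ < ε := by
    intro c hc ε hε
    have hmem : a + c ∈ closure (C + B + K) := h (Set.add_mem_add ha hc)
    rw [Metric.mem_closure_iff] at hmem
    obtain ⟨y, hy, hdy⟩ := hmem ε hε
    obtain ⟨p, ⟨c', hc', b, hb, rfl⟩, k, hk, rfl⟩ := hy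
    exact ⟨c', hc', b, hb, k, hk, by rwa [dist_eq_norm] at hdy⟩
  set ε : ℝ := δ/4 with hεdef
  have hε : 0 < ε := by positivity
  -- inductive approximation
  have key : ∀ n : ℕ, ∃ c ∈ C, ∃ d ∈ convexHull ℝ (B + K),
      ‖((n:ℝ)+1) • a + c₀ - c - ((n:ℝ)+1) • d‖ ≤ ((n:ℝ)+1) * ε := by
    intro n
    induction n with
    | zero =>
      obtain ⟨c', hc', b, hb, k, hk, hlt⟩ := step c₀ hc₀ ε hε
      refine ⟨c', hc', b + k, subset_convexHull ℝ _ ⟨b, hb, k, hk, rfl⟩, ?_⟩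
      push_cast
      simp only [zero_add, one_smul]
      have heq0 : a + c₀ - c' - (b + k) = a + c₀ - (c' + b + k) := by abel
      rw [heq0]
      linarith
    | succ n ih =>
      obtain ⟨c, hc, d, hd, hnorm⟩ := ih
      push_cast
      obtain ⟨c', hc', b, hb, k, hk, hlt⟩ := step c hc ε hε
      have hn2 : (0:ℝ) < (n:ℝ) + 2 := by positivity
      set d' : Y := (((n:ℝ)+1)/((n:ℝ)+2)) • d + (1/((n:ℝ)+2)) • (b + k) with hd'def
      have hd' : d' ∈ convexHull ℝ (B + K) := by
        refine (convex_convexHull ℝ _) hd (subset_convexHull ℝ _ ⟨b, hb, k, hk, rfl⟩)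
          (by positivity) (by positivity) ?_
        field_simp
        ring
      refine ⟨c', hc', d', hd', ?_⟩
      have hsub : ((n:ℝ)+2) • d' = ((n:ℝ)+1) • d + (b + k) := by
        rw [hd'def, smul_add, smul_smul, smul_smul]
        rw [mul_div_cancel₀ _ (ne_of_gt hn2), mul_one_div, div_self (ne_of_gt hn2), one_smul]
      have heq : ((n:ℝ)+1+1) • a + c₀ - c' - ((n:ℝ)+1+1) • d'
          = (((n:ℝ)+1) • a + c₀ - c - ((n:ℝ)+1) • d) + (a + c - (c' + b + k)) := by
        have h2 : ((n:ℝ)+1+1) = ((n:ℝ)+2) := by ring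
        rw [h2, hsub]
        module
      calc ‖((n:ℝ)+1+1) • a + c₀ - c' - ((n:ℝ)+1+1) • d'‖
          ≤ ‖((n:ℝ)+1) • a + c₀ - c - ((n:ℝ)+1) • d‖ + ‖a + c - (c' + b + k)‖ := by
            rw [heq]; exact norm_add_le _ _
        _ ≤ ((n:ℝ)+1) * ε + ε := by linarith
        _ = ((n:ℝ)+1+1) * ε := by ring
  -- pick n large
  obtain ⟨n, hn⟩ := exists_nat_gt (2*(‖c₀‖ + R)/δ)
  obtain ⟨c, hc, d, hd, hnorm⟩ := key n
  obtain ⟨m, hm, k, hk, hck⟩ := hCM hc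
  have hmR : ‖m‖ ≤ R := hR m hm
  have hn1 : (0:ℝ) < (n:ℝ) + 1 := by positivity
  set d' : Y := d + (((n:ℝ)+1)⁻¹) • k with hd'def
  have hd' : d' ∈ convexHull ℝ (B + K) :=
    hconvK d hd _ (hKcone _ (by positivity) k hk)
  refine ⟨d', hd', ?_⟩
  have hkey : a - d' = (((n:ℝ)+1)⁻¹) • (((n:ℝ)+1) • a + c₀ - c - ((n:ℝ)+1) • d)
      + (((n:ℝ)+1)⁻¹) • (m - c₀) := by
    rw [hd'def, ← hck]
    match_scalars <;> field_simp <;> ring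
  have hbound : ‖a - d'‖ ≤ ε + (‖c₀‖ + R) / ((n:ℝ)+1) := by
    calc ‖a - d'‖ ≤ ‖(((n:ℝ)+1)⁻¹) • (((n:ℝ)+1) • a + c₀ - c - ((n:ℝ)+1) • d)‖
          + ‖(((n:ℝ)+1)⁻¹) • (m - c₀)‖ := by rw [hkey]; exact norm_add_le _ _
      _ = (((n:ℝ)+1)⁻¹) * ‖((n:ℝ)+1) • a + c₀ - c - ((n:ℝ)+1) • d‖
          + (((n:ℝ)+1)⁻¹) * ‖m - c₀‖ := by
            rw [norm_smul, norm_smul, Real.norm_eq_abs, abs_of_pos (by positivity)]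
      _ ≤ (((n:ℝ)+1)⁻¹) * (((n:ℝ)+1) * ε) + (((n:ℝ)+1)⁻¹) * (‖m‖ + ‖c₀‖) := by
            have h1 : ‖m - c₀‖ ≤ ‖m‖ + ‖c₀‖ := norm_sub_le _ _
            have h2 : (0:ℝ) ≤ (((n:ℝ)+1)⁻¹) := by positivity
            gcongr
      _ ≤ ε + (‖c₀‖ + R) / ((n:ℝ)+1) := by
            rw [inv_mul_cancel_left₀ (ne_of_gt hn1), div_eq_inv_mul]
            have h3 := mul_le_mul_of_nonneg_left (show ‖m‖+‖c₀‖ ≤ ‖c₀‖+R by linarith)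
              (show (0:ℝ) ≤ ((n:ℝ)+1)⁻¹ by positivity)
            linarith
  have htail : (‖c₀‖ + R) / ((n:ℝ)+1) < δ/2 := by
    rw [div_lt_iff₀ hn1]
    have h1 : 2*(‖c₀‖ + R) < (n:ℝ) * δ := by
      have := (div_lt_iff₀ hδ).mp hn
      linarith
    nlinarith
  rw [dist_eq_norm]
  calc ‖a - d'‖ ≤ ε + (‖c₀‖ + R) / ((n:ℝ)+1) := hbound
    _ < δ/4 + δ/2 := by linarith [htail, hεdef]
    _ < δ := by linarith
end

section
/- Let X, Y be real normed spaces, K ⊆ Y a pointed closed convex cone, F : X ⇉ Y a set-valued map with nonempty values, x̄ ∈ X, and T a bounded linear operator in the Fréchet subdifferential of F at x̄. Then for every nonzero y* ∈ K⁺, the functional y* ∘ T belongs to the Fréchet subdifferential of the set-valued map y* ∘ F at x̄. -/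
open Pointwise

/-- `T` belongs to the Fréchet subdifferential of the set-valued map `F` at `x̄`,
with respect to the ordering cone `K`. -/
def HasFrechetSubdiff {X Y : Type*} [NormedAddCommGroup X] [NormedSpace ℝ X]
    [NormedAddCommGroup Y] [NormedSpace ℝ Y]
    (F : X → Set Y) (K : Set Y) (x₀ : X) (T : X →L[ℝ] Y) : Prop :=
  ∀ ε > (0:ℝ), ∃ δ > (0:ℝ), ∀ x, ‖x - x₀‖ < δ →
    F x ⊆ F x₀ + {T (x - x₀)} + (ε * ‖x - x₀‖) • Metric.closedBall (0:Y) 1 + K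

theorem stmt5 {X Y : Type*} [NormedAddCommGroup X] [NormedSpace ℝ X]
    [NormedAddCommGroup Y] [NormedSpace ℝ Y]
    (K : Set Y) (hKclosed : IsClosed K) (hKconv : Convex ℝ K)
    (hKcone : ∀ c : ℝ, 0 ≤ c → ∀ k ∈ K, c • k ∈ K)
    (hKpointed : K ∩ (-K) ⊆ {0})
    (F : X → Set Y) (hF : ∀ x, (F x).Nonempty) (x₀ : X) (T : X →L[ℝ] Y)
    (hT : HasFrechetSubdiff F K x₀ T) :
    ∀ y : Y →L[ℝ] ℝ, y ≠ 0 → (∀ k ∈ K, 0 ≤ y k) →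
      HasFrechetSubdiff (fun x => y '' F x) (Set.Ici (0:ℝ)) x₀ (y.comp T) := by
  intro y hy hyK ε hε
  have hyn : (0:ℝ) < ‖y‖ := norm_pos_iff.mpr hy
  obtain ⟨δ, hδ, h⟩ := hT (ε / ‖y‖) (div_pos hε hyn)
  refine ⟨δ, hδ, fun x hx v hv => ?_⟩
  obtain ⟨u, hu, rfl⟩ := hv
  obtain ⟨w, hw, k, hk, rfl⟩ := h x hx hu
  obtain ⟨p, hp, s, hs, rfl⟩ := hw
  obtain ⟨a, ha, c, hc, rfl⟩ := hp
  obtain ⟨b, hb, rfl⟩ := Set.mem_smul_set.mp hs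
  have hcT : c = T (x - x₀) := hc
  have hbn : ‖b‖ ≤ 1 := by simpa using hb
  refine ⟨y a + y (T (x - x₀)) + (ε * ‖x - x₀‖) • (y b / ‖y‖), ?_, y k, hyK k hk, ?_⟩
  · refine ⟨y a + y (T (x - x₀)), ⟨y a, ⟨a, ha, rfl⟩, y (T (x - x₀)), rfl, rfl⟩,
      (ε * ‖x - x₀‖) • (y b / ‖y‖), ?_, rfl⟩
    refine Set.smul_mem_smul_set ?_
    simp only [Metric.mem_closedBall, dist_zero_right, Real.norm_eq_abs]
    rw [abs_div, abs_of_nonneg (norm_nonneg y)]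
    apply div_le_one_of_le₀ ?_ (norm_nonneg y)
    calc |y b| ≤ ‖y‖ * ‖b‖ := y.le_opNorm b
      _ ≤ ‖y‖ * 1 := by nlinarith [norm_nonneg y]
      _ = ‖y‖ := mul_one _
  · subst hcT
    simp only [map_add, map_smul, smul_eq_mul]
    field_simp
end

section
/- Let X, Y be real normed spaces, K ⊆ Y a pointed closed convex cone such that D_Y + K is closed, and F : X ⇉ Y an upper K-convex set-valued map with nonempty values. Let x̄ ∈ X be such that F(x̄) is K-sequentially compact. Then the Fréchet subdifferential of F at x̄ equals {T ∈ B(X,Y) : F(x) ⊆ F(x̄) + T(x − x̄) + K for all x ∈ X}. -/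
open Pointwise

/-- `A` is sequentially compact with respect to the cone `K`. -/
def KSeqCompact {Y : Type*} [NormedAddCommGroup Y] (K A : Set Y) : Prop :=
  ∀ a : ℕ → Y, (∀ n, a n ∈ A) → ∃ c : ℕ → Y, (∀ n, c n ∈ K) ∧
    ∃ φ : ℕ → ℕ, StrictMono φ ∧ ∃ l ∈ A,
      Filter.Tendsto (fun n => a (φ n) - c (φ n)) Filter.atTop (nhds l)

/-- Auxiliary: if the unit ball plus the cone is closed, so is any positive ball plus cone. -/
lemma aux_ball_cone_closed {Y : Type*} [NormedAddCommGroup Y] [NormedSpace ℝ Y] (K : Set Y)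
    (hKcone : ∀ c : ℝ, 0 ≤ c → ∀ k ∈ K, c • k ∈ K)
    (hDK : IsClosed (Metric.closedBall (0:Y) 1 + K)) {s : ℝ} (hs : 0 < s) :
    IsClosed (Metric.closedBall (0:Y) s + K) := by
  have heq : Metric.closedBall (0:Y) s + K = s • (Metric.closedBall (0:Y) 1 + K) := by
    ext w
    constructor
    · rintro ⟨b, hb, k, hk, rfl⟩
      refine ⟨s⁻¹ • b + s⁻¹ • k, ⟨s⁻¹ • b, ?_, s⁻¹ • k,
        hKcone _ (inv_nonneg.mpr hs.le) _ hk, rfl⟩, ?_⟩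
      · rw [mem_closedBall_zero_iff] at hb ⊢
        rw [norm_smul, Real.norm_eq_abs, abs_of_nonneg (inv_nonneg.mpr hs.le)]
        calc s⁻¹ * ‖b‖ ≤ s⁻¹ * s := by
              exact mul_le_mul_of_nonneg_left hb (inv_nonneg.mpr hs.le)
          _ = 1 := inv_mul_cancel₀ hs.ne'
      · show s • (s⁻¹ • b + s⁻¹ • k) = b + k
        rw [smul_add, smul_smul, smul_smul, mul_inv_cancel₀ hs.ne', one_smul, one_smul]
    · rintro ⟨w, ⟨b, hb, k, hk, rfl⟩, rfl⟩
      show s • (b + k) ∈ _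
      rw [smul_add]
      refine ⟨s • b, ?_, s • k, hKcone s hs.le k hk, rfl⟩
      rw [mem_closedBall_zero_iff] at hb ⊢
      rw [norm_smul, Real.norm_eq_abs, abs_of_nonneg hs.le]
      calc s * ‖b‖ ≤ s * 1 := mul_le_mul_of_nonneg_left hb hs.le
        _ = s := mul_one s
  rw [heq]
  exact hDK.smul_of_ne_zero hs.ne'

theorem stmt7 {X Y : Type*} [NormedAddCommGroup X] [NormedSpace ℝ X]
    [NormedAddCommGroup Y] [NormedSpace ℝ Y]
    (K : Set Y) (hKclosed : IsClosed K) (hKconv : Convex ℝ K)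
    (hKcone : ∀ c : ℝ, 0 ≤ c → ∀ k ∈ K, c • k ∈ K)
    (hKpointed : K ∩ (-K) ⊆ {0})
    (hDK : IsClosed (Metric.closedBall (0:Y) 1 + K))
    (F : X → Set Y) (hF : ∀ x, (F x).Nonempty)
    (hFconv : ∀ x y : X, ∀ t : ℝ, 0 < t → t < 1 →
      t • F x + (1 - t) • F y ⊆ F (t • x + (1 - t) • y) + K)
    (x₀ : X) (hcomp : KSeqCompact K (F x₀)) :
    {T : X →L[ℝ] Y | HasFrechetSubdiff F K x₀ T} =
      {T : X →L[ℝ] Y | ∀ x, F x ⊆ F x₀ + {T (x - x₀)} + K} := by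
  obtain ⟨a₀, ha₀⟩ := hF x₀
  -- 0 ∈ K
  have hK0 : (0:Y) ∈ K := by
    have hmem := hFconv x₀ x₀ (1/2) (by norm_num) (by norm_num)
      (Set.add_mem_add (Set.smul_mem_smul_set ha₀) (Set.smul_mem_smul_set ha₀))
    obtain ⟨f, hf, k0, hk0, -⟩ := hmem
    have := hKcone 0 le_rfl k0 hk0
    rwa [zero_smul] at this
  -- K is closed under addition
  have hKadd : ∀ a ∈ K, ∀ b ∈ K, a + b ∈ K := by
    intro a ha b hb
    have h1 : (1/2:ℝ) • a + (1/2:ℝ) • b ∈ K :=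
      hKconv ha hb (by norm_num) (by norm_num) (by norm_num)
    have h2 := hKcone 2 (by norm_num) _ h1
    rwa [smul_add, smul_smul, smul_smul, show (2:ℝ) * (1/2) = 1 by norm_num,
      one_smul, one_smul] at h2
  ext T
  simp only [Set.mem_setOf_eq]
  constructor
  · -- hard direction
    intro hT x y hy
    by_cases hx : x = x₀
    · subst hx
      refine ⟨y + T (x - x), ⟨y, hy, T (x - x), rfl, rfl⟩, 0, hK0, ?_⟩
      show y + T (x - x) + 0 = y
      simp
    · have hr : 0 < ‖x - x₀‖ := norm_pos_iff.mpr (sub_ne_zero.mpr hx)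
      -- main approximation lemma
      have main : ∀ ε : ℝ, 0 < ε → ∃ l ∈ F x₀, ∃ vv kk : Y,
          ‖vv‖ ≤ ε * ‖x - x₀‖ ∧ kk ∈ K ∧ y - T (x - x₀) = l + vv + kk := by
        intro ε hε
        obtain ⟨δ, hδpos, hδ'⟩ := hT ε hε
        set r := ‖x - x₀‖ with hrdef
        set t := min (1/2) (δ / (2 * r)) with htdef
        have ht0 : 0 < t := lt_min (by norm_num) (by positivity)
        have ht1 : t < 1 := lt_of_le_of_lt (min_le_left _ _) (by norm_num)
        have htδ : t * r < δ := by
          have h8 : t * r ≤ (δ / (2 * r)) * r :=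
            mul_le_mul_of_nonneg_right (min_le_right _ _) hr.le
          have h9 : (δ / (2 * r)) * r = δ / 2 := by
            field_simp
          rw [h9] at h8
          linarith
        -- key one-step claim
        have key : ∀ z ∈ F x₀, ∃ u ∈ F x₀, ∃ b κ : Y, ‖b‖ ≤ ε * r ∧ κ ∈ K ∧
            u = t • ((y - T (x - x₀)) - b) + (1 - t) • z - κ := by
          intro z hz
          have h1 : t • y + (1 - t) • z ∈ F (t • x + (1 - t) • x₀) + K :=
            hFconv x x₀ t ht0 ht1
              (Set.add_mem_add (Set.smul_mem_smul_set hy) (Set.smul_mem_smul_set hz))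
          obtain ⟨w, hw, κ₀, hκ₀, hweq⟩ := h1
          have hdiff : (t • x + (1 - t) • x₀) - x₀ = t • (x - x₀) := by module
          have hxt : ‖(t • x + (1 - t) • x₀) - x₀‖ < δ := by
            rw [hdiff, norm_smul, Real.norm_eq_abs, abs_of_pos ht0]
            exact htδ
          have h2 := hδ' _ hxt hw
          rw [hdiff, map_smul, norm_smul, Real.norm_eq_abs, abs_of_pos ht0] at h2
          obtain ⟨w1, ⟨w2, ⟨u, hu, s1, rfl, rfl⟩, s, hsmem, rfl⟩, κ₁, hκ₁, hweq2⟩ := h2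
          rw [← hweq2] at hweq
          have hweqb : u + t • T (x - x₀) + s + κ₁ + κ₀ = t • y + (1 - t) • z := hweq
          have hu' : u = t • y + (1 - t) • z - t • T (x - x₀) - s - κ₁ - κ₀ := by
            rw [← hweqb]; abel
          obtain ⟨bb, hbb, hbbeq⟩ := hsmem
          rw [mem_closedBall_zero_iff] at hbb
          have hsn : ‖s‖ ≤ ε * (t * r) := by
            rw [← hbbeq, norm_smul, Real.norm_eq_abs, abs_of_nonneg (by positivity)]
            calc ε * (t * r) * ‖bb‖ ≤ ε * (t * r) * 1 :=
                  mul_le_mul_of_nonneg_left hbb (by positivity)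
              _ = ε * (t * r) := mul_one _
          refine ⟨u, hu, t⁻¹ • s, κ₀ + κ₁, ?_, hKadd _ hκ₀ _ hκ₁, ?_⟩
          · rw [norm_smul, Real.norm_eq_abs, abs_of_nonneg (inv_nonneg.mpr ht0.le)]
            have h9 : t⁻¹ * (ε * (t * r)) = ε * r := by
              field_simp
            calc t⁻¹ * ‖s‖ ≤ t⁻¹ * (ε * (t * r)) :=
                  mul_le_mul_of_nonneg_left hsn (inv_nonneg.mpr ht0.le)
              _ = ε * r := h9
          · have hts : t • ((y - T (x - x₀)) - t⁻¹ • s)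
                = t • y - t • T (x - x₀) - s := by
              rw [smul_sub, smul_sub, smul_smul, mul_inv_cancel₀ ht0.ne', one_smul]
            rw [hu', hts]
            abel
        -- iterate the key claim
        have seqex : ∀ n : ℕ, ∃ z ∈ F x₀, ∃ v k : Y, ‖v‖ ≤ ε * r ∧ k ∈ K ∧
            z + k = (1 - t)^n • a₀ + (1 - (1 - t)^n) • (y - T (x - x₀)) + v := by
          intro n
          induction n with
          | zero =>
            exact ⟨a₀, ha₀, 0, 0, by simp; positivity, hK0, by simp⟩
          | succ n ih =>
            obtain ⟨z, hz, v, k, hv, hk, heqn⟩ := ih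
            obtain ⟨u, hu, b, κ, hb, hκ, hueq⟩ := key z hz
            refine ⟨u, hu, (1 - t) • v - t • b, (1 - t) • k + κ, ?_,
              hKadd _ (hKcone _ (by linarith) _ hk) _ hκ, ?_⟩
            · calc ‖(1 - t) • v - t • b‖ ≤ ‖(1 - t) • v‖ + ‖t • b‖ := norm_sub_le _ _
                _ = (1 - t) * ‖v‖ + t * ‖b‖ := by
                    rw [norm_smul, norm_smul, Real.norm_eq_abs, Real.norm_eq_abs,
                      abs_of_nonneg (by linarith), abs_of_nonneg ht0.le]
                _ ≤ (1 - t) * (ε * r) + t * (ε * r) := by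
                    exact add_le_add (mul_le_mul_of_nonneg_left hv (by linarith))
                      (mul_le_mul_of_nonneg_left hb ht0.le)
                _ = ε * r := by ring
            · have hz2 : z = (1 - t)^n • a₀ + (1 - (1 - t)^n) • (y - T (x - x₀)) + v - k := by
                rw [← heqn]; abel
              rw [hueq, hz2, pow_succ]
              module
        choose z hzF v k hv hk heqs using seqex
        obtain ⟨c, hc, φ, hφ, l, hl, hlim⟩ := hcomp z hzF
        -- the sequence k (φ n) + c (φ n) - v (φ n) tends to (y - T (x-x₀)) - l
        have hpow : Filter.Tendsto (fun n => (1 - t)^(φ n)) Filter.atTop (nhds 0) :=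
          (tendsto_pow_atTop_nhds_zero_of_lt_one (by linarith) (by linarith)).comp
            hφ.tendsto_atTop
        have h6 : Filter.Tendsto
            (fun n => (1 - t)^(φ n) • a₀ + (1 - (1 - t)^(φ n)) • (y - T (x - x₀))
              - (z (φ n) - c (φ n))) Filter.atTop (nhds ((y - T (x - x₀)) - l)) := by
          have t1 := hpow.smul_const a₀
          have t2 := (Filter.Tendsto.sub (tendsto_const_nhds (x := (1:ℝ))) hpow).smul_const
            (y - T (x - x₀))
          have t3 := (t1.add t2).sub hlim
          simpa using t3
        have hgeq : ∀ n, (k (φ n) + c (φ n)) - v (φ n)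
            = (1 - t)^(φ n) • a₀ + (1 - (1 - t)^(φ n)) • (y - T (x - x₀))
              - (z (φ n) - c (φ n)) := by
          intro n
          have h7 : (1 - t)^(φ n) • a₀ + (1 - (1 - t)^(φ n)) • (y - T (x - x₀))
              = z (φ n) + k (φ n) - v (φ n) := eq_sub_iff_add_eq.mpr (heqs (φ n)).symm
          rw [h7]; abel
        have hglim : Filter.Tendsto (fun n => (k (φ n) + c (φ n)) - v (φ n))
            Filter.atTop (nhds ((y - T (x - x₀)) - l)) :=
          h6.congr (fun n => (hgeq n).symm)
        have hmemC : ∀ n, ((k (φ n) + c (φ n)) - v (φ n))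
            ∈ Metric.closedBall (0:Y) (ε * r) + K := by
          intro n
          refine ⟨-v (φ n), ?_, k (φ n) + c (φ n), hKadd _ (hk _) _ (hc _), by abel⟩
          rw [mem_closedBall_zero_iff, norm_neg]
          exact hv (φ n)
        have hC : IsClosed (Metric.closedBall (0:Y) (ε * r) + K) :=
          aux_ball_cone_closed K hKcone hDK (by positivity)
        have hmem2 : (y - T (x - x₀)) - l ∈ Metric.closedBall (0:Y) (ε * r) + K :=
          hC.mem_of_tendsto hglim (Filter.Eventually.of_forall hmemC)
        obtain ⟨vv, hvv, kk, hkk, hsum⟩ := hmem2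
        have hsum' : vv + kk = y - T (x - x₀) - l := hsum
        refine ⟨l, hl, vv, kk, mem_closedBall_zero_iff.mp hvv, hkk, ?_⟩
        rw [add_assoc, hsum']
        abel
      -- now let ε → 0
      have seqn : ∀ n : ℕ, ∃ l ∈ F x₀, ∃ vv kk : Y,
          ‖vv‖ ≤ (1/(n+1)) * ‖x - x₀‖ ∧ kk ∈ K ∧ y - T (x - x₀) = l + vv + kk :=
        fun n => main (1/(n+1)) (by positivity)
      choose f hf vv kk hvv hkk hp using seqn
      obtain ⟨c, hc, φ, hφ, g, hg, hglim⟩ := hcomp f hf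
      have hvvlim : Filter.Tendsto (fun n => vv (φ n)) Filter.atTop (nhds 0) := by
        have hbnd : ∀ n : ℕ, ‖vv (φ n)‖ ≤ (1/(n+1:ℝ)) * ‖x - x₀‖ := by
          intro n
          calc ‖vv (φ n)‖ ≤ (1/(φ n + 1 : ℝ)) * ‖x - x₀‖ := hvv (φ n)
            _ ≤ (1/(n+1:ℝ)) * ‖x - x₀‖ := by
                apply mul_le_mul_of_nonneg_right _ (norm_nonneg _)
                apply one_div_le_one_div_of_le (by positivity)
                have h10 : (n:ℝ) ≤ (φ n : ℝ) := by exact_mod_cast hφ.le_apply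
                linarith
        have hgl : Filter.Tendsto (fun n : ℕ => (1/(n+1:ℝ)) * ‖x - x₀‖)
            Filter.atTop (nhds 0) := by
          have := tendsto_one_div_add_atTop_nhds_zero_nat.mul_const ‖x - x₀‖
          simpa using this
        exact squeeze_zero_norm hbnd hgl
      have hlim2 : Filter.Tendsto (fun n => kk (φ n) + c (φ n)) Filter.atTop
          (nhds ((y - T (x - x₀)) - g)) := by
        have t1 := (Filter.Tendsto.sub (tendsto_const_nhds (x := y - T (x - x₀))) hvvlim).sub
          hglim
        have t2 : ∀ n, (y - T (x - x₀)) - vv (φ n) - (f (φ n) - c (φ n))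
            = kk (φ n) + c (φ n) := by
          intro n
          rw [hp (φ n)]
          abel
        refine Filter.Tendsto.congr t2 ?_
        simpa using t1
      have hpgK : (y - T (x - x₀)) - g ∈ K :=
        hKclosed.mem_of_tendsto hlim2
          (Filter.Eventually.of_forall (fun n => hKadd _ (hkk _) _ (hc _)))
      refine ⟨g + T (x - x₀), ⟨g, hg, T (x - x₀), rfl, rfl⟩,
        (y - T (x - x₀)) - g, hpgK, ?_⟩
      show g + T (x - x₀) + (y - T (x - x₀) - g) = y
      abel
  · -- easy direction
    intro h ε hε
    refine ⟨1, one_pos, fun x _ y hy => ?_⟩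
    obtain ⟨w, hw, kk, hkk, hsum⟩ := h x hy
    refine ⟨w + 0, ⟨w, hw, 0, ⟨0, Metric.mem_closedBall_self (by norm_num), smul_zero _⟩, rfl⟩,
      kk, hkk, ?_⟩
    show w + 0 + kk = y
    rw [add_zero]
    exact hsum
end

section
/- There exists a closed convex pointed cone K in the Banach space c₀ (of real sequences converging to 0, with the supremum norm) such that D_{c₀} + K is not closed. Concretely, let f ∈ (c₀)* be f(x) = Σₙ 2⁻ⁿ xₙ, and K = {x ∈ c₀ : x₁ ≤ 0, xₙ ≥ 0 for n ≥ 2, f(x) ≥ 0}. Then K is a closed convex pointed cone and D_{c₀} + K is not closed. -/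
open Pointwise ZeroAtInfty

noncomputable def fseq : C₀(ℕ, ℝ) → ℝ := fun x => ∑' n, (2:ℝ)⁻¹ ^ (n + 1) * x n

noncomputable def Kcone : Set C₀(ℕ, ℝ) :=
  {x | x 0 ≤ 0 ∧ (∀ n : ℕ, 1 ≤ n → 0 ≤ x n) ∧ 0 ≤ fseq x}

lemma abs_apply_le_norm (f : C₀(ℕ, ℝ)) (n : ℕ) : |f n| ≤ ‖f‖ := by
  rw [← Real.norm_eq_abs, ← ZeroAtInftyContinuousMap.norm_toBCF_eq_norm]
  exact f.toBCF.norm_coe_le_norm n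

lemma norm_le_of (f : C₀(ℕ, ℝ)) (C : ℝ) (hC : 0 ≤ C) (h : ∀ n, |f n| ≤ C) : ‖f‖ ≤ C := by
  rw [← ZeroAtInftyContinuousMap.norm_toBCF_eq_norm]
  exact BoundedContinuousFunction.norm_le hC |>.mpr fun n => by
    simpa [Real.norm_eq_abs] using h n

noncomputable def mkFin (f : ℕ → ℝ) (N : ℕ) (h : ∀ n, N ≤ n → f n = 0) : C₀(ℕ, ℝ) := by
  refine ⟨⟨f, continuous_of_discreteTopology⟩, ?_⟩
  rw [Filter.cocompact_eq_cofinite, Nat.cofinite_eq_atTop]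
  refine tendsto_const_nhds.congr' ?_
  filter_upwards [Filter.eventually_atTop.mpr ⟨N, h⟩] with n hn
  exact hn.symm

@[simp] lemma mkFin_apply (f : ℕ → ℝ) (N : ℕ) (h : ∀ n, N ≤ n → f n = 0) (n : ℕ) :
    mkFin f N h n = f n := rfl

lemma summable_aux (f : ℕ → ℝ) (C : ℝ) (h : ∀ n, |f n| ≤ C) :
    Summable fun n => (2:ℝ)⁻¹ ^ (n + 1) * f n := by
  apply Summable.of_norm_bounded (g := fun n => |C| * (1/2:ℝ) ^ n)
  · exact summable_geometric_two.mul_left _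
  · intro n
    rw [Real.norm_eq_abs, abs_mul, abs_pow, abs_of_nonneg (by norm_num : (0:ℝ) ≤ 2⁻¹),
      mul_comm (|C|)]
    have h2 : ((2:ℝ)⁻¹) ^ (n+1) ≤ ((2:ℝ)⁻¹) ^ n :=
      pow_le_pow_of_le_one (by norm_num) (by norm_num) (Nat.le_succ n)
    have h3 : ((2:ℝ)⁻¹ : ℝ) ^ n = (1/2:ℝ) ^ n := by norm_num
    rw [← h3]
    exact mul_le_mul h2 ((h n).trans (le_abs_self C)) (abs_nonneg _) (by positivity)

lemma summable_f (f : C₀(ℕ, ℝ)) : Summable fun n => (2:ℝ)⁻¹ ^ (n + 1) * f n :=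
  summable_aux f ‖f‖ (abs_apply_le_norm f)

lemma tsum_half : ∑' n : ℕ, (2:ℝ)⁻¹ ^ (n + 1) = 1 := by
  have : ∀ n : ℕ, (2:ℝ)⁻¹ ^ (n + 1) = 2⁻¹ * (1/2)^n := by
    intro n; rw [pow_succ]; ring_nf
  rw [tsum_congr this, tsum_mul_left, tsum_geometric_two]
  norm_num

lemma fseq_add (f g : C₀(ℕ, ℝ)) : fseq (f + g) = fseq f + fseq g := by
  unfold fseq
  rw [← Summable.tsum_add (summable_f f) (summable_f g)]
  exact tsum_congr fun n => by simp [mul_add]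

lemma fseq_smul (c : ℝ) (f : C₀(ℕ, ℝ)) : fseq (c • f) = c * fseq f := by
  unfold fseq
  rw [← tsum_mul_left]
  exact tsum_congr fun n => by simp; ring

lemma abs_fseq_le (f : C₀(ℕ, ℝ)) : |fseq f| ≤ ‖f‖ := by
  have hs : Summable fun n => ‖(2:ℝ)⁻¹ ^ (n + 1) * f n‖ :=
    (summable_f f).abs.congr fun n => (Real.norm_eq_abs _).symm
  have h1 : |fseq f| ≤ ∑' n, |(2:ℝ)⁻¹ ^ (n + 1) * f n| := by
    calc |fseq f| = ‖∑' n, (2:ℝ)⁻¹ ^ (n + 1) * f n‖ := (Real.norm_eq_abs _).symm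
      _ ≤ ∑' n, ‖(2:ℝ)⁻¹ ^ (n + 1) * f n‖ := norm_tsum_le_tsum_norm hs
      _ = ∑' n, |(2:ℝ)⁻¹ ^ (n + 1) * f n| := tsum_congr fun n => Real.norm_eq_abs _
  refine h1.trans ?_
  have h2 : ∑' n, |(2:ℝ)⁻¹ ^ (n + 1) * f n| ≤ ∑' n : ℕ, (2:ℝ)⁻¹ ^ (n + 1) * ‖f‖ := by
    apply Summable.tsum_le_tsum _ (summable_f f).abs
    · exact (summable_aux (fun _ => ‖f‖) ‖f‖ (fun n => by simp [abs_of_nonneg (norm_nonneg f)]))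
    · intro n
      rw [abs_mul, abs_pow, abs_of_nonneg (by norm_num : (0:ℝ) ≤ 2⁻¹)]
      exact mul_le_mul_of_nonneg_left (abs_apply_le_norm f n) (by positivity)
  refine h2.trans_eq ?_
  rw [tsum_mul_right, tsum_half, one_mul]

lemma fseq_continuous : Continuous fseq := by
  have : LipschitzWith 1 fseq := by
    refine LipschitzWith.of_dist_le_mul fun f g => ?_
    rw [dist_eq_norm, dist_eq_norm, NNReal.coe_one, one_mul, Real.norm_eq_abs]
    have : fseq f - fseq g = fseq (f - g) := by
      have := fseq_add (f - g) g
      simp at this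
      linarith
    rw [this]
    exact abs_fseq_le _
  exact this.continuous

lemma continuous_eval' (n : ℕ) : Continuous fun f : C₀(ℕ, ℝ) => f n :=
  ((continuous_eval_const (F := BoundedContinuousFunction ℕ ℝ) n).comp
    ZeroAtInftyContinuousMap.isometry_toBCF.continuous : _)

lemma fseq_mkFin (f : ℕ → ℝ) (N : ℕ) (h : ∀ n, N ≤ n → f n = 0) :
    fseq (mkFin f N h) = ∑ n ∈ Finset.range N, (2:ℝ)⁻¹ ^ (n + 1) * f n := by
  unfold fseq
  exact tsum_eq_sum fun b hb => by
    rw [mkFin_apply, h b (by simpa using hb), mul_zero]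

lemma geom_sum_half (k : ℕ) :
    ∑ n ∈ Finset.range k, (2:ℝ)⁻¹ ^ (n + 1) = 1 - (2:ℝ)⁻¹ ^ k := by
  induction k with
  | zero => simp
  | succ m ih => rw [Finset.sum_range_succ, ih, pow_succ]; ring

-- components of the closedness proof
lemma Kcone_isClosed : IsClosed Kcone := by
  have h1 : IsClosed {x : C₀(ℕ, ℝ) | x 0 ≤ 0} :=
    isClosed_le (continuous_eval' 0) continuous_const
  have h2 : IsClosed {x : C₀(ℕ, ℝ) | ∀ n : ℕ, 1 ≤ n → 0 ≤ x n} := by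
    have he : {x : C₀(ℕ, ℝ) | ∀ n : ℕ, 1 ≤ n → 0 ≤ x n} =
        ⋂ n : ℕ, {x : C₀(ℕ, ℝ) | 1 ≤ n → 0 ≤ x n} := by
      ext x; simp
    rw [he]
    refine isClosed_iInter fun n => ?_
    by_cases h : 1 ≤ n
    · have : {x : C₀(ℕ, ℝ) | 1 ≤ n → 0 ≤ x n} = {x : C₀(ℕ, ℝ) | 0 ≤ x n} := by
        ext x; simp [h]
      rw [this]
      exact isClosed_le continuous_const (continuous_eval' n)
    · have : {x : C₀(ℕ, ℝ) | 1 ≤ n → 0 ≤ x n} = Set.univ := by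
        ext x; simp [h]
      rw [this]; exact isClosed_univ
  have h3 : IsClosed {x : C₀(ℕ, ℝ) | 0 ≤ fseq x} :=
    isClosed_le continuous_const fseq_continuous
  exact h1.inter (h2.inter h3)

lemma Kcone_convex : Convex ℝ Kcone := by
  intro x hx y hy a b ha hb hab
  obtain ⟨hx0, hx1, hxf⟩ := hx
  obtain ⟨hy0, hy1, hyf⟩ := hy
  refine ⟨?_, ?_, ?_⟩
  · show (a • x + b • y) 0 ≤ 0
    simp only [ZeroAtInftyContinuousMap.coe_add, ZeroAtInftyContinuousMap.coe_smul,
      Pi.add_apply, Pi.smul_apply, smul_eq_mul]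
    nlinarith
  · intro n hn
    show 0 ≤ (a • x + b • y) n
    simp only [ZeroAtInftyContinuousMap.coe_add, ZeroAtInftyContinuousMap.coe_smul,
      Pi.add_apply, Pi.smul_apply, smul_eq_mul]
    have := hx1 n hn; have := hy1 n hn
    positivity
  · show 0 ≤ fseq (a • x + b • y)
    rw [fseq_add, fseq_smul, fseq_smul]
    positivity

lemma Kcone_cone : ∀ c : ℝ, 0 ≤ c → ∀ k ∈ Kcone, c • k ∈ Kcone := by
  intro c hc k hk
  obtain ⟨h0, h1, hf⟩ := hk
  refine ⟨?_, ?_, ?_⟩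
  · show (c • k) 0 ≤ 0
    simp only [ZeroAtInftyContinuousMap.coe_smul, Pi.smul_apply, smul_eq_mul]
    exact mul_nonpos_of_nonneg_of_nonpos hc h0
  · intro n hn
    show 0 ≤ (c • k) n
    simp only [ZeroAtInftyContinuousMap.coe_smul, Pi.smul_apply, smul_eq_mul]
    exact mul_nonneg hc (h1 n hn)
  · show 0 ≤ fseq (c • k)
    rw [fseq_smul]
    exact mul_nonneg hc hf

lemma Kcone_pointed : Kcone ∩ (-Kcone) ⊆ {0} := by
  rintro x ⟨⟨h0, h1, -⟩, hneg⟩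
  obtain ⟨h0', h1', -⟩ := Set.mem_neg.mp hneg
  have hxn : ∀ n, x n = 0 := by
    intro n
    rcases Nat.eq_zero_or_pos n with rfl | hn
    · have : -(x 0) ≤ 0 := by simpa using h0'
      linarith
    · have hpos := h1 n hn
      have hneg' : 0 ≤ -(x n) := by simpa using h1' n hn
      linarith
  have : x = 0 := ZeroAtInftyContinuousMap.ext fun n => by simp [hxn n]
  simp [this]

noncomputable def uElt : C₀(ℕ, ℝ) :=
  mkFin (fun n => if n = 0 then -2 else 0) 1
    (fun n hn => by simp [Nat.one_le_iff_ne_zero.mp hn])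

lemma fseq_uElt : fseq uElt = -1 := by
  rw [uElt, fseq_mkFin]
  norm_num

lemma uElt_not_mem : uElt ∉ Metric.closedBall (0 : C₀(ℕ, ℝ)) 1 + Kcone := by
  intro hmem
  obtain ⟨x, hx, y, hy, hxy⟩ := Set.mem_add.mp hmem
  rw [mem_closedBall_zero_iff] at hx
  obtain ⟨-, -, hyf⟩ := hy
  have hsum : fseq x + fseq y = -1 := by rw [← fseq_add, hxy, fseq_uElt]
  have hfx : fseq x ≤ -1 := by linarith
  -- consider S = ∑' n, 2⁻¹^(n+1) * (x n + 1)
  have hone : Summable fun n : ℕ => (2:ℝ)⁻¹ ^ (n + 1) * 1 :=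
    summable_aux (fun _ => 1) 1 (fun n => by norm_num)
  have hS : Summable fun n : ℕ => (2:ℝ)⁻¹ ^ (n + 1) * (x n + 1) := by
    refine ((summable_f x).add hone).congr fun n => by ring
  have hSval : (∑' n : ℕ, (2:ℝ)⁻¹ ^ (n + 1) * (x n + 1)) = fseq x + 1 := by
    calc (∑' n : ℕ, (2:ℝ)⁻¹ ^ (n + 1) * (x n + 1))
        = ∑' n : ℕ, ((2:ℝ)⁻¹ ^ (n + 1) * x n + (2:ℝ)⁻¹ ^ (n + 1)) :=
          tsum_congr fun n => by ring
      _ = (∑' n : ℕ, (2:ℝ)⁻¹ ^ (n + 1) * x n) + ∑' n : ℕ, (2:ℝ)⁻¹ ^ (n + 1) :=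
          Summable.tsum_add (summable_f x) (hone.congr fun n => by ring)
      _ = fseq x + 1 := by rw [tsum_half]; rfl
  have hSle : (∑' n : ℕ, (2:ℝ)⁻¹ ^ (n + 1) * (x n + 1)) ≤ 0 := by
    rw [hSval]; linarith
  have hnonneg : ∀ n, 0 ≤ (2:ℝ)⁻¹ ^ (n + 1) * (x n + 1) := by
    intro n
    have := (abs_le.mp ((abs_apply_le_norm x n).trans hx)).1
    have : (0:ℝ) ≤ x n + 1 := by linarith
    positivity
  -- x tends to 0, so some coordinate is > -1/2
  have htend : Filter.Tendsto (fun n => |x n|) Filter.atTop (nhds 0) := by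
    have := zero_at_infty x
    rw [Filter.cocompact_eq_cofinite, Nat.cofinite_eq_atTop] at this
    simpa using this.abs
  obtain ⟨N, hN⟩ := (htend.eventually_lt_const (by norm_num : (0:ℝ) < 1/2)).exists
  have hxN : -(1/2:ℝ) < x N := by
    have := (abs_lt.mp hN).1; linarith
  have hpos : 0 < (2:ℝ)⁻¹ ^ (N + 1) * (x N + 1) := by
    have h1 : (0:ℝ) < x N + 1 := by linarith
    positivity
  have := Summable.le_tsum hS N fun i _ => hnonneg i
  linarith

lemma uElt_mem_closure :
    uElt ∈ closure (Metric.closedBall (0 : C₀(ℕ, ℝ)) 1 + Kcone) := by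
  rw [Metric.mem_closure_iff]
  intro ε hε
  obtain ⟨m, hm⟩ := exists_pow_lt_of_lt_one (show (0:ℝ) < ε/8 by linarith)
    (by norm_num : (1/2:ℝ) < 1)
  set k := m + 2 with hk
  set q : ℝ := (2:ℝ)⁻¹ ^ k with hqdef
  have hq0 : 0 ≤ q := by positivity
  have hq4 : q ≤ 1/4 := by
    have : ((2:ℝ)⁻¹) ^ k ≤ ((2:ℝ)⁻¹) ^ 2 :=
      pow_le_pow_of_le_one (by norm_num) (by norm_num) (by omega)
    simpa [hqdef] using this.trans_eq (by norm_num)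
  have hqsmall : 4 * q < ε := by
    have h1 : ((2:ℝ)⁻¹) ^ k ≤ ((2:ℝ)⁻¹) ^ m :=
      pow_le_pow_of_le_one (by norm_num) (by norm_num) (by omega)
    have h2 : ((2:ℝ)⁻¹ : ℝ) ^ m = (1/2:ℝ) ^ m := by norm_num
    have : q < ε/8 := lt_of_le_of_lt (h1.trans_eq h2) hm
    linarith
  -- the two elements
  set xk : C₀(ℕ, ℝ) := mkFin (fun n => if n < k then (-1:ℝ) else 0) k
    (fun n hn => by simp [Nat.not_lt.mpr hn]) with hxkdef
  set yk : C₀(ℕ, ℝ) := mkFin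
    (fun n => if n = 0 then (-1:ℝ) else if n < k then 1 + 4 * q else 0) k
    (fun n hn => by
      have h0 : n ≠ 0 := by omega
      simp [h0, Nat.not_lt.mpr hn]) with hykdef
  have hxk_norm : ‖xk‖ ≤ 1 := by
    refine norm_le_of _ _ (by norm_num) fun n => ?_
    by_cases h : n < k <;> simp [hxkdef, h]
  have hyk_mem : yk ∈ Kcone := by
    refine ⟨?_, ?_, ?_⟩
    · show yk 0 ≤ 0
      simp [hykdef]
    · intro n hn
      show 0 ≤ yk n
      have h0 : n ≠ 0 := by omega
      by_cases h : n < k <;> simp [hykdef, h0, h] <;> positivity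
    · show 0 ≤ fseq yk
      rw [hykdef, fseq_mkFin]
      have hsplit : ∀ n ∈ Finset.range k,
          (2:ℝ)⁻¹ ^ (n + 1) * (if n = 0 then (-1:ℝ) else if n < k then 1 + 4 * q else 0) =
          (1 + 4 * q) * (2:ℝ)⁻¹ ^ (n + 1) + (if n = 0 then (-(2 + 4 * q)) * 2⁻¹ else 0) := by
        intro n hn
        rcases eq_or_ne n 0 with rfl | h0
        · simp; ring
        · rw [Finset.mem_range] at hn
          simp [h0, hn]; ring
      rw [Finset.sum_congr rfl hsplit, Finset.sum_add_distrib, ← Finset.mul_sum,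
        geom_sum_half, Finset.sum_ite_eq' (Finset.range k) 0 (fun _ => (-(2 + 4 * q)) * 2⁻¹)]
      have h0mem : (0 : ℕ) ∈ Finset.range k := by simp [hk]
      rw [if_pos h0mem, ← hqdef]
      nlinarith
  refine ⟨xk + yk, Set.mem_add.mpr ⟨xk, mem_closedBall_zero_iff.mpr hxk_norm, yk, hyk_mem, rfl⟩, ?_⟩
  rw [dist_eq_norm]
  have hnorm : ‖uElt - (xk + yk)‖ ≤ 4 * q := by
    refine norm_le_of _ _ (by positivity) fun n => ?_
    have happly : (uElt - (xk + yk)) n = uElt n - (xk n + yk n) := by simp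
    rw [happly]
    rcases eq_or_ne n 0 with rfl | h0
    · have : uElt 0 - (xk 0 + yk 0) = 0 := by
        simp [uElt, hxkdef, hykdef, hk]; norm_num
      rw [this, abs_zero]; linarith
    · by_cases h : n < k
      · have : uElt n - (xk n + yk n) = -(4 * q) := by
          simp [uElt, hxkdef, hykdef, h0, h]
        rw [this, abs_neg, abs_of_nonneg (by linarith)]
      · have : uElt n - (xk n + yk n) = 0 := by
          simp [uElt, hxkdef, hykdef, h0, h]
        rw [this, abs_zero]; linarith
  exact lt_of_le_of_lt hnorm hqsmall

theorem stmt9 :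
    IsClosed Kcone ∧ Convex ℝ Kcone ∧
    (∀ c : ℝ, 0 ≤ c → ∀ k ∈ Kcone, c • k ∈ Kcone) ∧
    (Kcone ∩ (-Kcone) ⊆ {0}) ∧
    ¬ IsClosed (Metric.closedBall (0 : C₀(ℕ, ℝ)) 1 + Kcone) := by
  refine ⟨Kcone_isClosed, Kcone_convex, Kcone_cone, Kcone_pointed, ?_⟩
  intro hcl
  exact uElt_not_mem (hcl.closure_subset uElt_mem_closure)
end

section
/- Let X be a real normed space, f : X → ℝ a function and F : X ⇉ ℝ a set-valued map with nonempty values such that F(x) + [0,∞) = f(x) + [0,∞) for every x ∈ X. Let x̄ ∈ X. If F is upper continuous at x̄, then f is lower semicontinuous at x̄. -/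
open Pointwise

theorem stmt10 {X : Type*} [NormedAddCommGroup X] [NormedSpace ℝ X]
    (f : X → ℝ) (F : X → Set ℝ) (hF : ∀ x, (F x).Nonempty)
    (h : ∀ x, F x + Set.Ici (0:ℝ) = {f x} + Set.Ici (0:ℝ))
    (x₀ : X)
    (huc : ∀ V : Set ℝ, IsOpen V → F x₀ ⊆ V →
      ∃ U ∈ nhds x₀, ∀ u ∈ U, F u ⊆ V) :
    LowerSemicontinuousAt f x₀ := by
  -- key: every element of F x is ≥ f x, and f x ≥ some element of F x
  have key : ∀ x, ∀ a ∈ F x, f x ≤ a := by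
    intro x a ha
    have : a ∈ F x + Set.Ici (0:ℝ) := ⟨a, ha, 0, Set.mem_Ici.mpr le_rfl, add_zero a⟩
    rw [h x] at this
    obtain ⟨b, hb, t, ht, hbt⟩ := this
    rw [Set.mem_singleton_iff] at hb
    subst hb
    simp only at hbt
    linarith [Set.mem_Ici.mp ht]
  have key2 : ∀ x, ∃ a ∈ F x, a ≤ f x := by
    intro x
    have : f x ∈ ({f x} : Set ℝ) + Set.Ici (0:ℝ) :=
      ⟨f x, rfl, 0, Set.mem_Ici.mpr le_rfl, add_zero _⟩
    rw [← h x] at this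
    obtain ⟨a, ha, t, ht, hat⟩ := this
    exact ⟨a, ha, by simp only at hat; linarith [Set.mem_Ici.mp ht]⟩
  intro y hy
  obtain ⟨U, hU, hUsub⟩ := huc (Set.Ioi y) isOpen_Ioi (fun a ha => lt_of_lt_of_le hy (key x₀ a ha))
  filter_upwards [hU] with u hu
  obtain ⟨a, haF, haf⟩ := key2 u
  exact lt_of_lt_of_le (hUsub u hu haF) haf
end

section
/- Let X be a real normed space, f : X → ℝ a function and F : X ⇉ ℝ a set-valued map with nonempty values such that F(x) + [0,∞) = f(x) + [0,∞) for every x ∈ X. Let x̄ ∈ X. If F is lower continuous at x̄, then f is upper semicontinuous at x̄. -/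
open Pointwise

theorem stmt11 {X : Type*} [NormedAddCommGroup X] [NormedSpace ℝ X]
    (f : X → ℝ) (F : X → Set ℝ) (hF : ∀ x, (F x).Nonempty)
    (h : ∀ x, F x + Set.Ici (0:ℝ) = {f x} + Set.Ici (0:ℝ))
    (x₀ : X)
    (hlc : ∀ V : Set ℝ, IsOpen V → (F x₀ ∩ V).Nonempty →
      ∃ U ∈ nhds x₀, ∀ u ∈ U, (F u ∩ V).Nonempty) :
    UpperSemicontinuousAt f x₀ := by
  have hle : ∀ x, ∀ z ∈ F x, f x ≤ z := by
    intro x z hz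
    have : z ∈ ({f x} : Set ℝ) + Set.Ici (0:ℝ) := by
      rw [← h x]
      exact ⟨z, hz, 0, Set.mem_Ici.mpr le_rfl, add_zero z⟩
    obtain ⟨a, ha, b, hb, hab⟩ := this
    simp only [Set.mem_singleton_iff] at ha
    subst ha
    have hab' : f x + b = z := hab
    linarith [Set.mem_Ici.mp hb]
  have hmem : ∀ x, f x ∈ F x := by
    intro x
    have : f x ∈ F x + Set.Ici (0:ℝ) := by
      rw [h x]
      exact ⟨f x, rfl, 0, Set.mem_Ici.mpr le_rfl, add_zero _⟩
    obtain ⟨a, ha, b, hb, hab⟩ := this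
    have h1 := hle x a ha
    have hab' : a + b = f x := hab
    have : a = f x := by linarith [Set.mem_Ici.mp hb]
    rwa [this] at ha
  intro y hy
  obtain ⟨U, hU, hUall⟩ := hlc (Set.Iio y) isOpen_Iio ⟨f x₀, hmem x₀, hy⟩
  filter_upwards [hU] with u hu
  obtain ⟨z, hzF, hzV⟩ := hUall u hu
  exact lt_of_le_of_lt (hle u z hzF) hzV
end

section
/- Let X, Y be real normed spaces, K ⊆ Y a pointed closed convex cone, e ∈ K \ {0}, and f : X → Y defined by f(x) = ‖x‖e. Then: (a) every operator of the form x ↦ x*(x)e with x* ∈ X*, ‖x*‖ ≤ 1, belongs to ∂̂f(0); and (b) for every y* ∈ K⁺ with y*(e) ≠ 0 and every T ∈ ∂̂f(0), the functional y*(e)⁻¹ (y* ∘ T) has norm at most 1. -/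
open Pointwise

theorem stmt15 {X Y : Type*} [NormedAddCommGroup X] [NormedSpace ℝ X]
    [NormedAddCommGroup Y] [NormedSpace ℝ Y]
    (K : Set Y) (hKclosed : IsClosed K) (hKconv : Convex ℝ K)
    (hKcone : ∀ c : ℝ, 0 ≤ c → ∀ k ∈ K, c • k ∈ K)
    (hKpointed : K ∩ (-K) ⊆ {0})
    (e : Y) (he : e ∈ K) (he0 : e ≠ 0) :
    (∀ x' : X →L[ℝ] ℝ, ‖x'‖ ≤ 1 →
      HasFrechetSubdiff (fun x => {‖x‖ • e}) K 0 (x'.smulRight e)) ∧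
    (∀ y : Y →L[ℝ] ℝ, (∀ k ∈ K, 0 ≤ y k) → y e ≠ 0 →
      ∀ T : X →L[ℝ] Y, HasFrechetSubdiff (fun x => {‖x‖ • e}) K 0 T →
        ‖(y e)⁻¹ • (y.comp T)‖ ≤ 1) := by
  constructor
  · intro x' hx' ε hε
    refine ⟨1, one_pos, fun x _ z hz => ?_⟩
    simp only [Set.mem_singleton_iff] at hz
    have hle : x' x ≤ ‖x‖ := by
      calc x' x ≤ |x' x| := le_abs_self _
        _ ≤ ‖x'‖ * ‖x‖ := x'.le_opNorm x
        _ ≤ 1 * ‖x‖ := by gcongr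
        _ = ‖x‖ := one_mul _
    have h1 : ‖(0:X)‖ • e + (x'.smulRight e) (x - 0) ∈
        ({‖(0:X)‖ • e} : Set Y) + {(x'.smulRight e) (x - 0)} :=
      Set.add_mem_add rfl rfl
    have h0 : (0:Y) ∈ (ε * ‖x - 0‖) • Metric.closedBall (0:Y) 1 :=
      ⟨0, by simp, by simp⟩
    have hK : (‖x‖ - x' x) • e ∈ K := hKcone _ (by linarith) e he
    have h3 := Set.add_mem_add (Set.add_mem_add h1 h0) hK
    have heq : z = (‖(0:X)‖ • e + (x'.smulRight e) (x - 0)) + 0 + (‖x‖ - x' x) • e := by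
      simp [hz, sub_smul]
    exact heq ▸ h3
  · intro y hy hye T hT
    have hye' : 0 < y e := lt_of_le_of_ne (hy e he) (Ne.symm hye)
    have key : ∀ x : X, y (T x) ≤ y e * ‖x‖ := by
      intro x
      have step : ∀ ε : ℝ, 0 < ε → y (T x) ≤ y e * ‖x‖ + ε * (‖y‖ * ‖x‖) := by
        intro ε hε
        obtain ⟨δ, hδ, hδ'⟩ := hT ε hε
        rcases eq_or_ne x 0 with rfl | hx0
        · simp
        have hxn : (0:ℝ) < ‖x‖ := norm_pos_iff.mpr hx0
        set c : ℝ := δ / (2 * ‖x‖) with hc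
        have hcpos : 0 < c := by positivity
        set x₁ : X := c • x with hx1
        have hx1norm : ‖x₁‖ = c * ‖x‖ := by
          rw [hx1, norm_smul, Real.norm_eq_abs, abs_of_pos hcpos]
        have hx1n : ‖x₁‖ = δ / 2 := by
          rw [hx1norm, hc]; field_simp
        have hmem := hδ' x₁ (by rw [sub_zero, hx1n]; linarith) (Set.mem_singleton (‖x₁‖ • e))
        obtain ⟨u, hu, k, hk, huk⟩ := hmem
        obtain ⟨v, hv, w, hw, hvw⟩ := hu
        obtain ⟨a, ha, b, hb, hab⟩ := hv
        simp only [Set.mem_singleton_iff] at ha hb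
        obtain ⟨d, hd, hdw⟩ := hw
        have hd1 : ‖d‖ ≤ 1 := by simpa using hd
        have heq : ‖x₁‖ • e = T x₁ + (ε * ‖x₁‖) • d + k := by
          rw [← huk, ← hvw, ← hab, ha, hb, ← hdw]
          simp
        have happ := congrArg y heq
        simp only [map_add, map_smul, smul_eq_mul] at happ
        have hyd : |y d| ≤ ‖y‖ := by
          calc |y d| = ‖y d‖ := rfl
            _ ≤ ‖y‖ * ‖d‖ := y.le_opNorm d
            _ ≤ ‖y‖ * 1 := by gcongr
            _ = ‖y‖ := mul_one _
        have hyd' : -‖y‖ ≤ y d := neg_le_of_abs_le hyd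
        have hyk : 0 ≤ y k := hy k hk
        have hTx1 : y (T x₁) = c * y (T x) := by
          rw [hx1, map_smul, map_smul, smul_eq_mul]
        rw [hx1norm, hTx1] at happ
        have hεc : 0 < ε * (c * ‖x‖) := by positivity
        have h4 : c * y (T x) ≤ c * (y e * ‖x‖) + ε * (c * ‖x‖) * ‖y‖ := by nlinarith
        have := (mul_le_mul_iff_right₀ hcpos).mp (by nlinarith : c * y (T x) ≤ c * (y e * ‖x‖ + ε * (‖y‖ * ‖x‖)))
        exact this
      refine le_of_forall_pos_le_add fun ε' hε' => ?_
      have h := step (ε' / (‖y‖ * ‖x‖ + 1)) (by positivity)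
      have hb : ε' / (‖y‖ * ‖x‖ + 1) * (‖y‖ * ‖x‖) ≤ ε' := by
        rw [div_mul_eq_mul_div, div_le_iff₀ (by positivity)]
        nlinarith [norm_nonneg y, norm_nonneg x]
      linarith
    refine ContinuousLinearMap.opNorm_le_bound _ zero_le_one fun x => ?_
    have h1 : y (T x) ≤ y e * ‖x‖ := key x
    have h2 : -(y e * ‖x‖) ≤ y (T x) := by
      have := key (-x)
      simp only [map_neg, norm_neg] at this
      linarith
    have habs : |y (T x)| ≤ y e * ‖x‖ := abs_le.mpr ⟨h2, h1⟩
    have : ‖((y e)⁻¹ • y.comp T) x‖ = (y e)⁻¹ * |y (T x)| := by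
      simp [Real.norm_eq_abs, abs_mul, abs_of_pos (inv_pos.mpr hye')]
      exact Or.inl hye'.le
    rw [this, one_mul]
    calc (y e)⁻¹ * |y (T x)| ≤ (y e)⁻¹ * (y e * ‖x‖) := by gcongr
      _ = ‖x‖ := by field_simp
end

section
/- Let Y be a real normed space, K ⊆ Y a closed convex cone, A ⊆ Y a K-sequentially compact set, and D ⊆ Y a set such that A ⊆ D + (Y \ −K). Then there exists ε > 0 such that A + B(0, ε) ⊆ D + (Y \ −K). -/
open Pointwise

theorem stmt17 {Y : Type*} [NormedAddCommGroup Y] [NormedSpace ℝ Y]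
    (K : Set Y) (hKclosed : IsClosed K) (hKconv : Convex ℝ K)
    (hKcone : ∀ c : ℝ, 0 ≤ c → ∀ k ∈ K, c • k ∈ K)
    (A D : Set Y) (hA : KSeqCompact K A)
    (h : A ⊆ D + (-K)ᶜ) :
    ∃ ε > (0:ℝ), A + Metric.ball (0:Y) ε ⊆ D + (-K)ᶜ := by
  set U := D + (-K)ᶜ with hUdef
  have hKadd : ∀ k1 ∈ K, ∀ k2 ∈ K, k1 + k2 ∈ K := by
    intro k1 h1 k2 h2
    have hm := hKconv h1 h2 (by norm_num : (0:ℝ) ≤ 1/2) (by norm_num : (0:ℝ) ≤ 1/2)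
      (by norm_num)
    have h2m := hKcone 2 (by norm_num) _ hm
    have : (2:ℝ) • ((1/2:ℝ) • k1 + (1/2:ℝ) • k2) = k1 + k2 := by
      rw [smul_add, smul_smul, smul_smul]; norm_num
    rwa [this] at h2m
  have hUK : ∀ u ∈ U, ∀ k ∈ K, u + k ∈ U := by
    rintro u ⟨d, hd, x, hx, rfl⟩ k hk
    refine ⟨d, hd, x + k, ?_, by beta_reduce; abel⟩
    intro hxk
    apply hx
    rw [Set.mem_neg] at hxk ⊢
    have := hKadd _ hxk _ hk
    simpa using this
  have hUopen : IsOpen U := hKclosed.neg.isOpen_compl.add_left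
  by_contra hcon
  push_neg at hcon
  have hseq : ∀ n : ℕ, ∃ a ∈ A, ∃ b : Y, ‖b‖ < 1/(n+1) ∧ a + b ∉ U := by
    intro n
    have h1 : (0:ℝ) < 1/(n+1) := by positivity
    obtain ⟨x, hx, hxU⟩ := Set.not_subset.mp (hcon (1/(n+1)) h1)
    obtain ⟨a, ha, b, hb, rfl⟩ := hx
    exact ⟨a, ha, b, by simpa using mem_ball_zero_iff.mp hb, hxU⟩
  choose a ha b hb hab using hseq
  obtain ⟨c, hc, φ, hφ, l, hlA, hlim⟩ := hA a ha
  have hlU : l ∈ U := h hlA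
  obtain ⟨δ, hδ, hball⟩ := Metric.isOpen_iff.mp hUopen l hlU
  have hb0 : Filter.Tendsto (fun n => b (φ n)) Filter.atTop (nhds 0) := by
    refine squeeze_zero_norm ?_ tendsto_one_div_add_atTop_nhds_zero_nat
    intro n
    have h1 : ‖b (φ n)‖ < 1/(φ n + 1) := hb (φ n)
    have h2 : (1:ℝ)/(φ n + 1) ≤ 1/(n+1) := by
      apply one_div_le_one_div_of_le (by positivity)
      have : n ≤ φ n := hφ.le_apply
      linarith [(Nat.cast_le (α := ℝ)).mpr this]
    linarith
  have hsum : Filter.Tendsto (fun n => a (φ n) - c (φ n) + b (φ n))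
      Filter.atTop (nhds l) := by simpa using hlim.add hb0
  have hev : ∀ᶠ n in Filter.atTop,
      a (φ n) - c (φ n) + b (φ n) ∈ Metric.ball l δ :=
    hsum (Metric.ball_mem_nhds l hδ)
  obtain ⟨n, hn⟩ := hev.exists
  have hmem : a (φ n) + b (φ n) ∈ U := by
    have h1 : a (φ n) - c (φ n) + b (φ n) ∈ U := hball hn
    have h2 := hUK _ h1 _ (hc (φ n))
    have : a (φ n) - c (φ n) + b (φ n) + c (φ n) = a (φ n) + b (φ n) := by abel
    rwa [this] at h2
  exact hab (φ n) hmem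
end

section
/- Penalization for ideal minima: Let X, Y be real normed spaces, K ⊆ Y a closed convex cone, F : X ⇉ Y a set-valued map with nonempty values, M ⊆ X nonempty, and x̄ ∈ M an accumulation point of M. Assume F(x̄) is K-sequentially compact and x̄ is an ideal minimum for F on M, i.e., F(x̄) ⊄ F(x) + (Y \ −K) for all x ∈ M \ {x̄}. Suppose there are e ∈ K \ {0} and ℓ > 0 such that F(u) + ℓ‖u − v‖e ⊆ F(v) + K for all u ∈ X \ M and v ∈ M. Then x̄ is an ideal minimum on all of X for G(x) = F(x) + ℓ d_M(x) e, i.e., F(x̄) ⊄ G(x) + (Y \ −K) for all x ∈ X \ {x̄}. -/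
open Pointwise

theorem stmt18 {X Y : Type*} [NormedAddCommGroup X] [NormedSpace ℝ X]
    [NormedAddCommGroup Y] [NormedSpace ℝ Y]
    (K : Set Y) (hKclosed : IsClosed K) (hKconv : Convex ℝ K)
    (hKcone : ∀ c : ℝ, 0 ≤ c → ∀ k ∈ K, c • k ∈ K)
    (F : X → Set Y) (hF : ∀ x, (F x).Nonempty)
    (M : Set X) (hM : M.Nonempty) (x₀ : X) (hx₀M : x₀ ∈ M)
    (hx₀acc : x₀ ∈ closure (M \ {x₀}))
    (hcomp : KSeqCompact K (F x₀))
    (hmin : ∀ x ∈ M, x ≠ x₀ → ¬ (F x₀ ⊆ F x + (-K)ᶜ))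
    (e : Y) (he : e ∈ K) (he0 : e ≠ 0) (ℓ : ℝ) (hℓ : 0 < ℓ)
    (hlip : ∀ u ∉ M, ∀ v ∈ M,
      F u + {(ℓ * ‖u - v‖) • e} ⊆ F v + K) :
    ∀ x : X, x ≠ x₀ →
      ¬ (F x₀ ⊆ (F x + {(ℓ * Metric.infDist x M) • e}) + (-K)ᶜ) := by
  have addK : ∀ a ∈ K, ∀ b ∈ K, a + b ∈ K := by
    intro a ha b hb
    have h2 : ((1:ℝ)/2) • a + ((1:ℝ)/2) • b ∈ K :=
      hKconv ha hb (by norm_num) (by norm_num) (by norm_num)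
    have := hKcone 2 (by norm_num) _ h2
    simpa [smul_add, smul_smul] using this
  intro x hx
  by_cases hxM : x ∈ M
  · have hd : Metric.infDist x M = 0 := Metric.infDist_zero_of_mem hxM
    have hset : F x + {(ℓ * Metric.infDist x M) • e} = F x := by
      rw [hd]; simp
    rw [hset]
    exact hmin x hxM hx
  · set d := Metric.infDist x M with hd
    have hv : ∀ n : ℕ, ∃ v, v ∈ M ∧ v ≠ x₀ ∧ dist x v ≤ d + 2/(n+1) := by
      intro n
      have hpos : (0:ℝ) < 1/(n+1) := by positivity
      obtain ⟨u, huM, hu⟩ := (Metric.infDist_lt_iff hM).mp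
        (by linarith : d < d + 1/(n+1))
      by_cases hux : u = x₀
      · obtain ⟨w, hw, hwd⟩ := Metric.mem_closure_iff.mp hx₀acc (1/(n+1)) hpos
        refine ⟨w, hw.1, hw.2, ?_⟩
        have htri := dist_triangle x x₀ w
        subst hux
        have : (2:ℝ)/(n+1) = 1/(n+1) + 1/(n+1) := by ring
        rw [this]
        linarith
      · have h2 : (2:ℝ)/(n+1) = 1/(n+1) + 1/(n+1) := by ring
        refine ⟨u, huM, hux, by linarith⟩
    choose v hvM hvne hvd using hv
    have hy : ∀ n, ∃ y ∈ F x₀, ∀ w ∈ F (v n), w - y ∈ K := by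
      intro n
      obtain ⟨y, hyF, hyn⟩ := Set.not_subset.mp (hmin (v n) (hvM n) (hvne n))
      refine ⟨y, hyF, fun w hw => ?_⟩
      by_contra hk
      exact hyn (Set.mem_add.mpr ⟨w, hw, y - w,
        by simp [Set.mem_neg, neg_sub, hk], by abel⟩)
    choose y hyF hyK using hy
    obtain ⟨c, hcK, φ, hφ, l, hlF, hlt⟩ := hcomp y hyF
    -- distance convergence
    have hd_le : ∀ n, d ≤ dist x (v n) := fun n =>
      Metric.infDist_le_dist_of_mem (hvM n)
    have htwo : Filter.Tendsto (fun n : ℕ => d + 2/(n+1)) Filter.atTop (nhds d) := by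
      have h1 : Filter.Tendsto (fun n : ℕ => 2/((n:ℝ)+1)) Filter.atTop (nhds 0) := by
        have := (tendsto_one_div_add_atTop_nhds_zero_nat (𝕜 := ℝ)).const_mul 2
        simpa [div_eq_mul_inv] using this
      simpa using (tendsto_const_nhds.add h1 :
        Filter.Tendsto (fun n : ℕ => d + 2/((n:ℝ)+1)) Filter.atTop (nhds (d + 0)))
    have hdist : Filter.Tendsto (fun n => dist x (v n)) Filter.atTop (nhds d) :=
      tendsto_of_tendsto_of_tendsto_of_le_of_le tendsto_const_nhds htwo hd_le hvd
    have hdistφ : Filter.Tendsto (fun n => dist x (v (φ n))) Filter.atTop (nhds d) :=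
      hdist.comp hφ.tendsto_atTop
    -- key claim
    have claim : ∀ z ∈ F x, z + (ℓ * d) • e - l ∈ K := by
      intro z hz
      have key : ∀ n, z + (ℓ * dist x (v (φ n))) • e - (y (φ n) - c (φ n)) ∈ K := by
        intro n
        have hmem : z + (ℓ * ‖x - v (φ n)‖) • e
            ∈ F x + {(ℓ * ‖x - v (φ n)‖) • e} :=
          Set.add_mem_add hz rfl
        obtain ⟨w, hw, k, hk, hwk⟩ :=
          Set.mem_add.mp (hlip x hxM (v (φ n)) (hvM _) hmem)
        have h1 : w - y (φ n) ∈ K := hyK _ _ hw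
        have h2 : (w - y (φ n)) + k + (c (φ n)) ∈ K :=
          addK _ (addK _ h1 _ hk) _ (hcK (φ n))
        have heq : z + (ℓ * dist x (v (φ n))) • e - (y (φ n) - c (φ n))
            = (w - y (φ n)) + k + (c (φ n)) := by
          rw [dist_eq_norm]
          have : z + (ℓ * ‖x - v (φ n)‖) • e = w + k := hwk.symm
          rw [this]; abel
        rw [heq]; exact h2
      have hconv : Filter.Tendsto
          (fun n => z + (ℓ * dist x (v (φ n))) • e - (y (φ n) - c (φ n)))
          Filter.atTop (nhds (z + (ℓ * d) • e - l)) := by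
        exact (tendsto_const_nhds.add ((hdistφ.const_mul ℓ).smul_const e)).sub hlt
      exact hKclosed.mem_of_tendsto hconv (Filter.Eventually.of_forall key)
    rw [Set.not_subset]
    refine ⟨l, hlF, fun hmem => ?_⟩
    obtain ⟨a, ha, b, hb, hab⟩ := Set.mem_add.mp hmem
    obtain ⟨z, hz, s, hs, hzs⟩ := Set.mem_add.mp ha
    rw [Set.mem_singleton_iff] at hs
    have hbK : b ∈ -K := by
      rw [Set.mem_neg]
      have : -b = z + (ℓ * d) • e - l := by
        rw [← hab, ← hzs, hs]; abel
      rw [this]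
      exact claim z hz
    exact hb hbK
end
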